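/- For all x, y ∈ ℝ, the functions b and s satisfy the identity b_{xx}(x,y)·b(x,y) − b_x(x,y)² = −s(−x,−y)·s(x,y). -/

import Mathlib

/-- First partial derivative (with respect to the first variable) of a function of two
real variables. -/
noncomputable def pd1 (f : ℝ → ℝ → ℝ) (x y : ℝ) : ℝ := deriv (fun t => f t y) x

/-- Second partial derivative (with respect to the second variable) of a function of two
real variables. -/
noncomputable def pd2 (f : ℝ → ℝ → ℝ) (x y : ℝ) : ℝ := deriv (fun t => f x t) y

/-- The blow-up series `b(t₂,t₃)` of the U(3) blow-up formula for manifolds of simple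
type. -/
noncomputable def bFun (x y : ℝ) : ℝ :=
  (1 / 3) * Real.exp (-x ^ 2 / 2 + y ^ 2) *
    (Real.cosh (Real.sqrt 3 * x) + 2 * Real.cos (Real.sqrt 3 * y))

/-- The blow-up series `s(t₂,t₃)` of the U(3) blow-up formula for manifolds of simple
type. -/
noncomputable def sFun (x y : ℝ) : ℝ :=
  (1 / 3) * Real.exp (-x ^ 2 / 2 + y ^ 2) *
    (Real.cosh (Real.sqrt 3 * x) - Real.cos (Real.sqrt 3 * y) +
      Real.sqrt 3 * Real.sin (Real.sqrt 3 * y))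

/-- Explicit formula for `∂b/∂x`. -/
noncomputable def bx (x y : ℝ) : ℝ :=
  (1 / 3) * Real.exp (-x ^ 2 / 2 + y ^ 2) *
    ((-x) * (Real.cosh (Real.sqrt 3 * x) + 2 * Real.cos (Real.sqrt 3 * y)) +
      Real.sqrt 3 * Real.sinh (Real.sqrt 3 * x))

lemma hExp (x y : ℝ) : HasDerivAt (fun t : ℝ => Real.exp (-t ^ 2 / 2 + y ^ 2))
    ((-x) * Real.exp (-x ^ 2 / 2 + y ^ 2)) x := by
  have h1 : HasDerivAt (fun t : ℝ => -t ^ 2 / 2 + y ^ 2) (-x) x := by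
    have := ((hasDerivAt_pow 2 x).neg.div_const 2).add_const (y ^ 2)
    convert this using 1
    · rfl
    · rfl
    · rfl
    simp; ring
  simpa [mul_comm] using h1.exp

lemma hCosh (x : ℝ) : HasDerivAt (fun t : ℝ => Real.cosh (Real.sqrt 3 * t))
    (Real.sqrt 3 * Real.sinh (Real.sqrt 3 * x)) x := by
  have h : HasDerivAt (fun t : ℝ => Real.sqrt 3 * t) (Real.sqrt 3) x := by
    simpa using (hasDerivAt_id x).const_mul (Real.sqrt 3)
  simpa [mul_comm] using h.cosh

lemma hSinh (x : ℝ) : HasDerivAt (fun t : ℝ => Real.sinh (Real.sqrt 3 * t))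
    (Real.sqrt 3 * Real.cosh (Real.sqrt 3 * x)) x := by
  have h : HasDerivAt (fun t : ℝ => Real.sqrt 3 * t) (Real.sqrt 3) x := by
    simpa using (hasDerivAt_id x).const_mul (Real.sqrt 3)
  simpa [mul_comm] using h.sinh

lemma hB (x y : ℝ) : HasDerivAt (fun t => bFun t y) (bx x y) x := by
  have h := (((hExp x y).mul ((hCosh x).add_const (2 * Real.cos (Real.sqrt 3 * y)))).const_mul
    (1 / 3 : ℝ))
  convert h using 1
  · rfl
  · rfl
  · ext t; simp [bFun]; ring
  · simp [bx]; ring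

lemma pd1B (x y : ℝ) : pd1 bFun x y = bx x y := (hB x y).deriv

/-- Explicit formula for `∂²b/∂x²`. -/
noncomputable def bxx (x y : ℝ) : ℝ :=
  (1 / 3) * Real.exp (-x ^ 2 / 2 + y ^ 2) *
    ((x ^ 2 - 1) * (Real.cosh (Real.sqrt 3 * x) + 2 * Real.cos (Real.sqrt 3 * y)) -
      2 * x * Real.sqrt 3 * Real.sinh (Real.sqrt 3 * x) + 3 * Real.cosh (Real.sqrt 3 * x))

lemma hBx (x y : ℝ) : HasDerivAt (fun t => bx t y) (bxx x y) x := by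
  have h3 : Real.sqrt 3 * Real.sqrt 3 = 3 := Real.mul_self_sqrt (by norm_num)
  have hin : HasDerivAt (fun t : ℝ =>
      (-t) * (Real.cosh (Real.sqrt 3 * t) + 2 * Real.cos (Real.sqrt 3 * y)) +
        Real.sqrt 3 * Real.sinh (Real.sqrt 3 * t))
      ((-1) * (Real.cosh (Real.sqrt 3 * x) + 2 * Real.cos (Real.sqrt 3 * y)) +
        (-x) * (Real.sqrt 3 * Real.sinh (Real.sqrt 3 * x)) +
        Real.sqrt 3 * (Real.sqrt 3 * Real.cosh (Real.sqrt 3 * x))) x :=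
    (((hasDerivAt_id x).neg.mul ((hCosh x).add_const _)).add ((hSinh x).const_mul _))
  have h := (((hExp x y).mul hin).const_mul (1 / 3 : ℝ))
  convert h using 1
  · rfl
  · rfl
  · ext t; simp [bx]; ring
  · simp only [bxx]
    linear_combination (-(1/3) * Real.exp (-x ^ 2 / 2 + y ^ 2) *
      Real.cosh (Real.sqrt 3 * x)) * h3

/-- The first blow-up differential equation (with point classes
specialized to `a₂ = 3`, `a₃ = 0`):
`b_{xx}·b − (b_x)² = −(s∘τ)·s`, where `τ(x,y) = (−x,−y)`. -/
theorem stmt2 (x y : ℝ) :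
    pd1 (pd1 bFun) x y * bFun x y - (pd1 bFun x y) ^ 2 = -(sFun (-x) (-y) * sFun x y) := by
  have e1 : (fun t => pd1 bFun t y) = fun t => bx t y := funext fun t => pd1B t y
  have e2 : pd1 (pd1 bFun) x y = bxx x y := by
    unfold pd1; rw [show (fun t => deriv (fun s => bFun s y) t) = fun t => bx t y from
      funext fun t => (hB t y).deriv]
    exact (hBx x y).deriv
  rw [e2, pd1B]
  have h3 : Real.sqrt 3 * Real.sqrt 3 = 3 := Real.mul_self_sqrt (by norm_num)
  have hC := Real.cosh_sq_sub_sinh_sq (Real.sqrt 3 * x)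
  have hsc := Real.sin_sq_add_cos_sq (Real.sqrt 3 * y)
  simp only [bxx, bx, bFun, sFun, neg_sq, neg_neg, mul_neg, Real.cosh_neg, Real.cos_neg, Real.sin_neg]
  set E := Real.exp (-x ^ 2 / 2 + y ^ 2)
  linear_combination ((1/3) * E ^ 2) * hC - ((1/3) * E ^ 2) * hsc -
    ((1/9) * E ^ 2 * (Real.sinh (Real.sqrt 3 * x) ^ 2 + Real.sin (Real.sqrt 3 * y) ^ 2)) * h3
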